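/- For every λ₀ > 0 and every τ < 0 there exists a constant C > 0 (depending only on λ₀ and τ) with the following property. For all λ ≥ λ₀, all w ≥ 2, all B ≥ 0, and every continuous function v : [w,∞) → ℝ with |v(t)| ≤ B·t^τ for all t ≥ w, the function u(z) = (2√λ)⁻¹ ( e^{−√λ z} ∫_w^z e^{√λ t}·t·v(t) dt + e^{√λ z} ∫_z^∞ e^{−√λ t}·t·v(t) dt ) satisfies |u(z)| ≤ C·B·z^{2+τ} for all z ≥ w. -/

import Mathlib

open MeasureTheory intervalIntegral

private lemma pow_le_fact_exp (n : ℕ) {t : ℝ} (ht : 0 ≤ t) :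
    t ^ n ≤ n.factorial * Real.exp t := by
  have h := Real.sum_le_exp_of_nonneg ht (n + 1)
  have h2 : t ^ n / n.factorial ≤ ∑ i ∈ Finset.range (n + 1), t ^ i / i.factorial := by
    exact Finset.single_le_sum (f := fun i => t ^ i / (i.factorial : ℝ))
      (fun i _ => by positivity) (Finset.self_mem_range_succ n)
  have hf : (0:ℝ) < n.factorial := by positivity
  have h3 := h2.trans h
  rw [div_le_iff₀ hf] at h3
  nlinarith [h3]

private lemma exists_K (s₀ q : ℝ) (hs₀ : 0 < s₀) (hq : 1 ≤ q) :
    ∃ K : ℝ, 1 ≤ K ∧ ∀ x, 0 ≤ x → (1 + x / 2) ^ q ≤ K * Real.exp (s₀ * x / 2) := by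
  set n := ⌈q⌉₊ with hn
  set a := max 1 s₀⁻¹ with ha
  have ha1 : (1:ℝ) ≤ a := le_max_left _ _
  have ha2 : s₀⁻¹ ≤ a := le_max_right _ _
  refine ⟨a ^ n * n.factorial * Real.exp 1, ?_, ?_⟩
  · have h1 : (1:ℝ) ≤ a ^ n := one_le_pow₀ ha1
    have h2 : (1:ℝ) ≤ n.factorial := by exact_mod_cast Nat.one_le_iff_ne_zero.mpr n.factorial_ne_zero
    have h3 : (1:ℝ) ≤ a ^ n * n.factorial := by nlinarith
    nlinarith [Real.one_le_exp (by norm_num : (0:ℝ) ≤ 1), h3]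
  · intro x hx
    have hbase : (1:ℝ) ≤ 1 + x / 2 := by linarith
    have h1 : (1 + x / 2) ^ q ≤ (1 + x / 2) ^ (n : ℝ) :=
      Real.rpow_le_rpow_of_exponent_le hbase (Nat.le_ceil q)
    rw [Real.rpow_natCast] at h1
    have hy : 0 ≤ s₀ * x / 2 := by positivity
    have h2 : 1 + x / 2 ≤ a * (1 + s₀ * x / 2) := by
      have hxx : x / 2 = s₀⁻¹ * (s₀ * x / 2) := by field_simp
      nlinarith [mul_le_mul_of_nonneg_right ha2 hy]
    have h3 : (1 + x / 2) ^ n ≤ a ^ n * (1 + s₀ * x / 2) ^ n := by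
      calc (1 + x / 2) ^ n ≤ (a * (1 + s₀ * x / 2)) ^ n :=
            pow_le_pow_left₀ (by linarith) h2 n
        _ = a ^ n * (1 + s₀ * x / 2) ^ n := mul_pow _ _ _
    have h4 : (1 + s₀ * x / 2) ^ n ≤ n.factorial * Real.exp (1 + s₀ * x / 2) :=
      pow_le_fact_exp n (by linarith)
    have h5 : Real.exp (1 + s₀ * x / 2) = Real.exp 1 * Real.exp (s₀ * x / 2) :=
      Real.exp_add 1 _
    have han : (0:ℝ) ≤ a ^ n := by positivity
    calc (1 + x / 2) ^ q ≤ a ^ n * (1 + s₀ * x / 2) ^ n := h1.trans h3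
      _ ≤ a ^ n * (n.factorial * Real.exp (1 + s₀ * x / 2)) :=
          mul_le_mul_of_nonneg_left h4 han
      _ = a ^ n * n.factorial * Real.exp 1 * Real.exp (s₀ * x / 2) := by rw [h5]; ring

private lemma rpow_interp {τ q t z : ℝ} (ht : 2 ≤ t) (htz : t ≤ z) (hq : 1 ≤ q)
    (hq2 : -(1 + τ) ≤ q) :
    t ^ (1 + τ) ≤ z ^ (1 + τ) * (1 + (z - t) / 2) ^ q := by
  have ht0 : (0:ℝ) < t := by linarith
  have hz0 : (0:ℝ) < z := by linarith
  have hbase : (1:ℝ) ≤ 1 + (z - t) / 2 := by linarith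
  rcases le_or_gt 0 (1 + τ) with h | h
  · have h1 : t ^ (1 + τ) ≤ z ^ (1 + τ) := Real.rpow_le_rpow ht0.le htz h
    have h2 : (1:ℝ) ≤ (1 + (z - t) / 2) ^ q := by
      have := Real.rpow_le_rpow_of_exponent_le hbase (show (0:ℝ) ≤ q by linarith)
      rwa [Real.rpow_zero] at this
    nlinarith [Real.rpow_nonneg hz0.le (1 + τ)]
  · have hzt : z / t ≤ 1 + (z - t) / 2 := by
      rw [div_le_iff₀ ht0]; nlinarith
    have h1 : (z / t) ^ (-(1 + τ)) ≤ (1 + (z - t) / 2) ^ (-(1 + τ)) :=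
      Real.rpow_le_rpow (by positivity) hzt (by linarith)
    have h2 : (1 + (z - t) / 2) ^ (-(1 + τ)) ≤ (1 + (z - t) / 2) ^ q :=
      Real.rpow_le_rpow_of_exponent_le hbase hq2
    have key : t ^ (1 + τ) = z ^ (1 + τ) * (z / t) ^ (-(1 + τ)) := by
      rw [Real.rpow_neg (by positivity), ← Real.inv_rpow (by positivity), inv_div,
        ← Real.mul_rpow hz0.le (by positivity)]
      congr 1
      field_simp
    rw [key]
    exact mul_le_mul_of_nonneg_left (h1.trans h2) (Real.rpow_nonneg hz0.le _)

private lemma integral_exp_half (s w z : ℝ) (hs : 0 < s) :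
    ∫ t in w..z, Real.exp (s * t / 2) =
      (Real.exp (s * z / 2) - Real.exp (s * w / 2)) * (2 / s) := by
  have hder : ∀ t : ℝ, HasDerivAt (fun u => Real.exp (s * u / 2) * (2 / s))
      (Real.exp (s * t / 2)) t := by
    intro t
    have h1 : HasDerivAt (fun u : ℝ => s * u / 2) (s / 2) t := by
      simpa using ((hasDerivAt_id t).const_mul s).div_const 2
    have h2 := (h1.exp).mul_const (2 / s)
    refine h2.congr_deriv ?_
    have h2s : s / 2 * (2 / s) = 1 := by field_simp [hs.ne']
    linear_combination (Real.exp (s * t / 2)) * h2s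
  rw [intervalIntegral.integral_eq_sub_of_hasDerivAt (fun t _ => hder t)
    ((by fun_prop : Continuous fun t : ℝ => Real.exp (s * t / 2)).intervalIntegrable _ _)]
  ring

private lemma integral_exp_neg_half (s z : ℝ) (hs : 0 < s) :
    ∫ t in Set.Ioi z, Real.exp (-(s * t) / 2) = Real.exp (-(s * z) / 2) * (2 / s) := by
  have hint : IntegrableOn (fun t : ℝ => Real.exp (-(s * t) / 2)) (Set.Ioi z) := by
    have := exp_neg_integrableOn_Ioi z (show (0:ℝ) < s / 2 by positivity)
    refine this.congr_fun (fun x _ => ?_) measurableSet_Ioi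
    congr 1; ring
  have hder : ∀ t : ℝ, HasDerivAt (fun u => -(Real.exp (-(s * u) / 2) * (2 / s)))
      (Real.exp (-(s * t) / 2)) t := by
    intro t
    have h1 : HasDerivAt (fun u : ℝ => -(s * u) / 2) (-(s / 2)) t := by
      have := (((hasDerivAt_id t).const_mul s).neg.div_const 2)
      simpa [neg_div] using this
    have h2 := ((h1.exp).mul_const (2 / s)).neg
    refine h2.congr_deriv ?_
    have h2s : s / 2 * (2 / s) = 1 := by field_simp [hs.ne']
    linear_combination (Real.exp (-(s * t) / 2)) * h2s
  have htends : Filter.Tendsto (fun t => -(Real.exp (-(s * t) / 2) * (2 / s)))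
      Filter.atTop (nhds 0) := by
    have h0 : Filter.Tendsto (fun t : ℝ => Real.exp (-(s * t) / 2)) Filter.atTop (nhds 0) := by
      have h1 : Filter.Tendsto (fun t : ℝ => s / 2 * t) Filter.atTop Filter.atTop :=
        Filter.Tendsto.const_mul_atTop (by positivity) Filter.tendsto_id
      have := Real.tendsto_exp_neg_atTop_nhds_zero.comp h1
      refine this.congr fun t => ?_
      simp only [Function.comp_apply]
      congr 1; ring
    simpa using (h0.mul_const (2 / s)).neg
  have := MeasureTheory.integral_Ioi_of_hasDerivAt_of_tendsto
    (f := fun u => -(Real.exp (-(s * u) / 2) * (2 / s)))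
    (by fun_prop : Continuous fun u : ℝ => -(Real.exp (-(s * u) / 2) * (2 / s))).continuousWithinAt
    (fun x _ => hder x) hint htends
  rw [this]; ring

set_option maxHeartbeats 1000000 in
/-- The case `j_k = 0`, `λ_k > 0` of Lemma B.3: the particular solution of
`u″ − λu = z·v(z)` built by variation of parameters from `e^{±√λ z}` satisfies the weighted
bound `|u(z)| ≤ C B z^{2+τ}`, with `C` depending only on `λ₀` and `τ`. -/
theorem variation_of_parameters_exponential_bound (lam₀ τ : ℝ) (hlam₀ : 0 < lam₀)
    (hτ : τ < 0) :
    ∃ C : ℝ, 0 < C ∧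
      ∀ lam w B : ℝ, lam₀ ≤ lam → 2 ≤ w → 0 ≤ B →
      ∀ v : ℝ → ℝ, ContinuousOn v (Set.Ici w) →
      (∀ t, w ≤ t → |v t| ≤ B * t ^ τ) →
      ∀ z, w ≤ z →
        |(2 * Real.sqrt lam)⁻¹ *
            (Real.exp (-Real.sqrt lam * z) *
              (∫ t in w..z, Real.exp (Real.sqrt lam * t) * t * v t) +
             Real.exp (Real.sqrt lam * z) *
              (∫ t in Set.Ioi z, Real.exp (-Real.sqrt lam * t) * t * v t))|
          ≤ C * B * z ^ (2 + τ) := by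
  have hs₀ : 0 < Real.sqrt lam₀ := Real.sqrt_pos.mpr hlam₀
  set s₀ := Real.sqrt lam₀ with hs₀def
  set q : ℝ := max 1 (-(1 + τ)) with hqdef
  have hq1 : 1 ≤ q := le_max_left _ _
  have hq2 : -(1 + τ) ≤ q := le_max_right _ _
  obtain ⟨K, hK1, hK⟩ := exists_K s₀ q hs₀ hq1
  have hK0 : (0:ℝ) ≤ K := by linarith
  refine ⟨2 * K / s₀ ^ 2, by positivity, ?_⟩
  intro lam w B hlam hw hB v hv hvb z hz
  set s := Real.sqrt lam with hsdef
  have hss : s₀ ≤ s := Real.sqrt_le_sqrt hlam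
  have hs : 0 < s := lt_of_lt_of_le hs₀ hss
  have hz2 : (2:ℝ) ≤ z := le_trans hw hz
  have hz0 : (0:ℝ) < z := by linarith
  have hz1 : (1:ℝ) ≤ z := by linarith
  set D := B * K * z ^ (1 + τ) with hD
  have hD0 : 0 ≤ D := by positivity
  -- pointwise bound on [w, z]
  have hb1 : ∀ t ∈ Set.Icc w z, |Real.exp (s * t) * t * v t| ≤
      D * Real.exp (s * z / 2) * Real.exp (s * t / 2) := by
    intro t ht
    obtain ⟨ht1, ht2⟩ := ht
    have ht2' : (2:ℝ) ≤ t := le_trans hw ht1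
    have ht0 : (0:ℝ) < t := by linarith
    have inner : t ^ (1 + τ) ≤ z ^ (1 + τ) * (K * Real.exp (s * (z - t) / 2)) := by
      have i1 : t ^ (1 + τ) ≤ z ^ (1 + τ) * (1 + (z - t) / 2) ^ q :=
        rpow_interp ht2' ht2 hq1 hq2
      have i2 : (1 + (z - t) / 2) ^ q ≤ K * Real.exp (s₀ * (z - t) / 2) :=
        hK (z - t) (by linarith)
      have i3 : Real.exp (s₀ * (z - t) / 2) ≤ Real.exp (s * (z - t) / 2) :=
        Real.exp_le_exp.mpr (by nlinarith)
      calc t ^ (1 + τ) ≤ z ^ (1 + τ) * (1 + (z - t) / 2) ^ q := i1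
        _ ≤ z ^ (1 + τ) * (K * Real.exp (s₀ * (z - t) / 2)) :=
            mul_le_mul_of_nonneg_left i2 (Real.rpow_nonneg hz0.le _)
        _ ≤ z ^ (1 + τ) * (K * Real.exp (s * (z - t) / 2)) :=
            mul_le_mul_of_nonneg_left (mul_le_mul_of_nonneg_left i3 hK0)
              (Real.rpow_nonneg hz0.le _)
    have he1 : Real.exp (s * t) * Real.exp (s * (z - t) / 2) =
        Real.exp (s * z / 2) * Real.exp (s * t / 2) := by
      rw [← Real.exp_add, ← Real.exp_add]; congr 1; ring
    calc |Real.exp (s * t) * t * v t| = Real.exp (s * t) * t * |v t| := by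
          rw [abs_mul, abs_mul, abs_of_pos (Real.exp_pos _), abs_of_pos ht0]
      _ ≤ Real.exp (s * t) * t * (B * t ^ τ) :=
          mul_le_mul_of_nonneg_left (hvb t ht1) (by positivity)
      _ = B * (Real.exp (s * t) * t ^ (1 + τ)) := by
          rw [Real.rpow_add ht0, Real.rpow_one]; ring
      _ ≤ B * (Real.exp (s * t) * (z ^ (1 + τ) * (K * Real.exp (s * (z - t) / 2)))) :=
          mul_le_mul_of_nonneg_left
            (mul_le_mul_of_nonneg_left inner (Real.exp_pos _).le) hB
      _ = D * Real.exp (s * z / 2) * Real.exp (s * t / 2) := by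
          rw [hD]; linear_combination (B * z ^ (1 + τ) * K) * he1
  -- pointwise bound on [z, ∞)
  have hb2 : ∀ t, z ≤ t → |Real.exp (-s * t) * t * v t| ≤
      D * Real.exp (-(s * z) / 2) * Real.exp (-(s * t) / 2) := by
    intro t ht
    have ht2' : (2:ℝ) ≤ t := le_trans hz2 ht
    have ht0 : (0:ℝ) < t := by linarith
    have hbase : (1:ℝ) ≤ 1 + (t - z) / 2 := by linarith
    have htb : t ≤ z * (K * Real.exp (s * (t - z) / 2)) := by
      have i0 : t ≤ z * (1 + (t - z) / 2) := by nlinarith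
      have i1 : (1 + (t - z) / 2) ≤ (1 + (t - z) / 2) ^ q := by
        have := Real.rpow_le_rpow_of_exponent_le hbase hq1
        rwa [Real.rpow_one] at this
      have i2 : (1 + (t - z) / 2) ^ q ≤ K * Real.exp (s₀ * (t - z) / 2) :=
        hK (t - z) (by linarith)
      have i3 : Real.exp (s₀ * (t - z) / 2) ≤ Real.exp (s * (t - z) / 2) :=
        Real.exp_le_exp.mpr (by nlinarith)
      calc t ≤ z * (1 + (t - z) / 2) := i0
        _ ≤ z * (K * Real.exp (s₀ * (t - z) / 2)) :=
            mul_le_mul_of_nonneg_left (i1.trans i2) hz0.le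
        _ ≤ z * (K * Real.exp (s * (t - z) / 2)) :=
            mul_le_mul_of_nonneg_left (mul_le_mul_of_nonneg_left i3 hK0) hz0.le
    have htτ : t ^ τ ≤ z ^ τ := Real.rpow_le_rpow_of_nonpos hz0 ht hτ.le
    have hzτ : z ^ (1 + τ) = z * z ^ τ := by
      rw [Real.rpow_add hz0, Real.rpow_one]
    have he2 : Real.exp (-s * t) * Real.exp (s * (t - z) / 2) =
        Real.exp (-(s * z) / 2) * Real.exp (-(s * t) / 2) := by
      rw [← Real.exp_add, ← Real.exp_add]; congr 1; ring
    calc |Real.exp (-s * t) * t * v t| = Real.exp (-s * t) * t * |v t| := by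
          rw [abs_mul, abs_mul, abs_of_pos (Real.exp_pos _), abs_of_pos ht0]
      _ ≤ Real.exp (-s * t) * t * (B * t ^ τ) :=
          mul_le_mul_of_nonneg_left (hvb t (le_trans hz ht)) (by positivity)
      _ ≤ Real.exp (-s * t) * t * (B * z ^ τ) :=
          mul_le_mul_of_nonneg_left (mul_le_mul_of_nonneg_left htτ hB) (by positivity)
      _ ≤ Real.exp (-s * t) * (z * (K * Real.exp (s * (t - z) / 2))) * (B * z ^ τ) := by
          have hnn : (0:ℝ) ≤ B * z ^ τ := by positivity
          have := mul_le_mul_of_nonneg_left htb (Real.exp_pos (-s * t)).le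
          exact mul_le_mul_of_nonneg_right this hnn
      _ = D * Real.exp (-(s * z) / 2) * Real.exp (-(s * t) / 2) := by
          rw [hD, hzτ]; linear_combination (B * (z * z ^ τ) * K) * he2
  -- integral bound I₁
  have hsubI : Set.Icc w z ⊆ Set.Ici w := Set.Icc_subset_Ici_self
  have hcont1 : ContinuousOn (fun t => Real.exp (s * t) * t * v t) (Set.Icc w z) := by
    exact (((Real.continuous_exp.comp (continuous_const.mul continuous_id)).mul
      continuous_id).continuousOn).mul (hv.mono hsubI)
  have hint1 : IntervalIntegrable (fun t => Real.exp (s * t) * t * v t) volume w z := by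
    apply ContinuousOn.intervalIntegrable
    rwa [Set.uIcc_of_le hz]
  have hintg1 : IntervalIntegrable
      (fun t => D * Real.exp (s * z / 2) * Real.exp (s * t / 2)) volume w z :=
    ((by fun_prop : Continuous fun t : ℝ =>
      D * Real.exp (s * z / 2) * Real.exp (s * t / 2))).intervalIntegrable _ _
  have hI1 : |∫ t in w..z, Real.exp (s * t) * t * v t| ≤ D * (2 / s) * Real.exp (s * z) := by
    have h1 := intervalIntegral.abs_integral_le_integral_abs (f := fun t =>
      Real.exp (s * t) * t * v t) (μ := volume) hz
    have h2 : (∫ t in w..z, |Real.exp (s * t) * t * v t|) ≤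
        ∫ t in w..z, D * Real.exp (s * z / 2) * Real.exp (s * t / 2) :=
      intervalIntegral.integral_mono_on hz hint1.abs hintg1 hb1
    have h3 : (∫ t in w..z, D * Real.exp (s * z / 2) * Real.exp (s * t / 2)) =
        D * Real.exp (s * z / 2) *
          ((Real.exp (s * z / 2) - Real.exp (s * w / 2)) * (2 / s)) := by
      rw [intervalIntegral.integral_const_mul, integral_exp_half s w z hs]
    have e1 : Real.exp (s * z / 2) * Real.exp (s * z / 2) = Real.exp (s * z) := by
      rw [← Real.exp_add]; congr 1; ring
    have hpos : (0:ℝ) ≤ D * (2 / s) * (Real.exp (s * z / 2) * Real.exp (s * w / 2)) := by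
      positivity
    have expand : D * Real.exp (s * z / 2) *
        ((Real.exp (s * z / 2) - Real.exp (s * w / 2)) * (2 / s)) =
        D * (2 / s) * Real.exp (s * z) -
        D * (2 / s) * (Real.exp (s * z / 2) * Real.exp (s * w / 2)) := by
      rw [← e1]; ring
    linarith [h1.trans (h2.trans_eq h3), expand, hpos]
  -- integral bound I₂
  have hsub2 : Set.Ioi z ⊆ Set.Ici w := fun t ht => le_trans hz (le_of_lt ht)
  have hcont2 : ContinuousOn (fun t => Real.exp (-s * t) * t * v t) (Set.Ioi z) := by
    exact (((Real.continuous_exp.comp (continuous_const.mul continuous_id)).mul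
      continuous_id).continuousOn).mul (hv.mono hsub2)
  have hintg2 : IntegrableOn
      (fun t : ℝ => D * Real.exp (-(s * z) / 2) * Real.exp (-(s * t) / 2)) (Set.Ioi z) := by
    have hbase : IntegrableOn (fun t : ℝ => Real.exp (-(s * t) / 2)) (Set.Ioi z) := by
      have := exp_neg_integrableOn_Ioi z (show (0:ℝ) < s / 2 by positivity)
      refine this.congr_fun (fun x _ => ?_) measurableSet_Ioi
      congr 1; ring
    exact hbase.const_mul _
  have haeb : ∀ᵐ t ∂(volume.restrict (Set.Ioi z)), ‖Real.exp (-s * t) * t * v t‖ ≤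
      D * Real.exp (-(s * z) / 2) * Real.exp (-(s * t) / 2) := by
    rw [ae_restrict_iff' measurableSet_Ioi]
    refine ae_of_all _ fun t ht => ?_
    rw [Real.norm_eq_abs]
    exact hb2 t (le_of_lt ht)
  have hI2 : |∫ t in Set.Ioi z, Real.exp (-s * t) * t * v t| ≤
      D * (2 / s) * Real.exp (-(s * z)) := by
    have hmeas : AEStronglyMeasurable (fun t => Real.exp (-s * t) * t * v t)
        (volume.restrict (Set.Ioi z)) :=
      hcont2.aestronglyMeasurable measurableSet_Ioi
    have h1 : ‖∫ t in Set.Ioi z, Real.exp (-s * t) * t * v t‖ ≤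
        ∫ t in Set.Ioi z, D * Real.exp (-(s * z) / 2) * Real.exp (-(s * t) / 2) :=
      MeasureTheory.norm_integral_le_of_norm_le hintg2 haeb
    have h2 : (∫ t in Set.Ioi z, D * Real.exp (-(s * z) / 2) * Real.exp (-(s * t) / 2)) =
        D * Real.exp (-(s * z) / 2) * (Real.exp (-(s * z) / 2) * (2 / s)) := by
      rw [MeasureTheory.integral_const_mul, integral_exp_neg_half s z hs]
    have e2 : Real.exp (-(s * z) / 2) * Real.exp (-(s * z) / 2) = Real.exp (-(s * z)) := by
      rw [← Real.exp_add]; congr 1; ring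
    rw [Real.norm_eq_abs] at h1
    have expand : D * Real.exp (-(s * z) / 2) * (Real.exp (-(s * z) / 2) * (2 / s)) =
        D * (2 / s) * Real.exp (-(s * z)) := by
      rw [← e2]; ring
    linarith [h1.trans_eq h2, expand]
  -- assembly
  set I₁ := ∫ t in w..z, Real.exp (s * t) * t * v t with hI₁def
  set I₂ := ∫ t in Set.Ioi z, Real.exp (-s * t) * t * v t with hI₂def
  have hee : Real.exp (-s * z) * Real.exp (s * z) = 1 := by
    rw [← Real.exp_add]
    norm_num
  have hee2 : Real.exp (s * z) * Real.exp (-(s * z)) = 1 := by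
    rw [← Real.exp_add]
    norm_num
  have step : |(2 * s)⁻¹ * (Real.exp (-s * z) * I₁ + Real.exp (s * z) * I₂)| ≤
      2 * D / s ^ 2 := by
    have habs : |(2 * s)⁻¹ * (Real.exp (-s * z) * I₁ + Real.exp (s * z) * I₂)| =
        (2 * s)⁻¹ * |Real.exp (-s * z) * I₁ + Real.exp (s * z) * I₂| := by
      rw [abs_mul, abs_of_pos (by positivity : (0:ℝ) < (2 * s)⁻¹)]
    rw [habs]
    have h4 : |Real.exp (-s * z) * I₁ + Real.exp (s * z) * I₂| ≤
        Real.exp (-s * z) * (D * (2 / s) * Real.exp (s * z)) +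
        Real.exp (s * z) * (D * (2 / s) * Real.exp (-(s * z))) := by
      calc |Real.exp (-s * z) * I₁ + Real.exp (s * z) * I₂| ≤
            |Real.exp (-s * z) * I₁| + |Real.exp (s * z) * I₂| := abs_add_le _ _
        _ = Real.exp (-s * z) * |I₁| + Real.exp (s * z) * |I₂| := by
            rw [abs_mul, abs_mul, abs_of_pos (Real.exp_pos _), abs_of_pos (Real.exp_pos _)]
        _ ≤ _ := add_le_add
            (mul_le_mul_of_nonneg_left hI1 (Real.exp_pos _).le)
            (mul_le_mul_of_nonneg_left hI2 (Real.exp_pos _).le)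
    have h5 : Real.exp (-s * z) * (D * (2 / s) * Real.exp (s * z)) +
        Real.exp (s * z) * (D * (2 / s) * Real.exp (-(s * z))) = 4 * D / s := by
      have expand : Real.exp (-s * z) * (D * (2 / s) * Real.exp (s * z)) +
          Real.exp (s * z) * (D * (2 / s) * Real.exp (-(s * z))) =
          D * (2 / s) * (Real.exp (-s * z) * Real.exp (s * z)) +
          D * (2 / s) * (Real.exp (s * z) * Real.exp (-(s * z))) := by ring
      rw [expand, hee, hee2]
      field_simp
      ring
    calc (2 * s)⁻¹ * |Real.exp (-s * z) * I₁ + Real.exp (s * z) * I₂| ≤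
          (2 * s)⁻¹ * (4 * D / s) := by
          rw [← h5]
          exact mul_le_mul_of_nonneg_left h4 (by positivity)
      _ = 2 * D / s ^ 2 := by field_simp; ring
  have step2 : 2 * D / s ^ 2 ≤ 2 * D / s₀ ^ 2 := by
    apply div_le_div_of_nonneg_left (by linarith) (by positivity)
    nlinarith
  have step3 : 2 * D / s₀ ^ 2 = (2 * K / s₀ ^ 2) * B * z ^ (1 + τ) := by
    rw [hD]; field_simp
  have step4 : (2 * K / s₀ ^ 2) * B * z ^ (1 + τ) ≤ (2 * K / s₀ ^ 2) * B * z ^ (2 + τ) := by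
    apply mul_le_mul_of_nonneg_left _ (by positivity)
    exact Real.rpow_le_rpow_of_exponent_le hz1 (by linarith)
  calc |(2 * s)⁻¹ * (Real.exp (-s * z) * I₁ + Real.exp (s * z) * I₂)| ≤
        2 * D / s ^ 2 := step
    _ ≤ 2 * D / s₀ ^ 2 := step2
    _ = (2 * K / s₀ ^ 2) * B * z ^ (1 + τ) := step3
    _ ≤ (2 * K / s₀ ^ 2) * B * z ^ (2 + τ) := step4
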